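/- In a treatment-control completely randomized experiment with N units, N₁ ≥ 1 treated and N₀ = N − N₁ ≥ 1 controls, the variance of the difference-in-means estimator under the randomization distribution equals Var(τ̂) = S²(1)/N₁ + S²(0)/N₀ − S²(τ)/N, where S²(1), S²(0) are the finite-population variances of the treated and control potential outcomes and S²(τ) is the finite-population variance of the individual treatment effects. -/

import Mathlib

open Finset

/-- Expectation of `f` under the uniform distribution on the finite set `s`. -/
noncomputable def avgOver {α : Type*} (s : Finset α) (f : α → ℝ) : ℝ :=
  (∑ a ∈ s, f a) / (s.card : ℝ)

/-- Variance of `f` under the uniform distribution on the finite set `s`. -/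
noncomputable def varOver {α : Type*} (s : Finset α) (f : α → ℝ) : ℝ :=
  avgOver s fun a => (f a - avgOver s f) ^ 2

/-- Finite-population mean `Ȳ = N⁻¹ Σᵢ Yᵢ`. -/
noncomputable def fpMean {N : ℕ} (Y : Fin N → ℝ) : ℝ := (∑ i, Y i) / (N : ℝ)

/-- Finite-population variance `S² = (N-1)⁻¹ Σᵢ (Yᵢ - Ȳ)²`. -/
noncomputable def fpVar {N : ℕ} (Y : Fin N → ℝ) : ℝ :=
  (∑ i, (Y i - fpMean Y) ^ 2) / ((N : ℝ) - 1)

/-- The set of treatment assignments: all subsets of the `N` units of size `N₁`. -/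
def assignments (N N₁ : ℕ) : Finset (Finset (Fin N)) :=
  Finset.powersetCard N₁ Finset.univ

/-- Observed outcome `Yᵢ = Zᵢ Yᵢ(1) + (1 - Zᵢ) Yᵢ(0)`. -/
noncomputable def obsY {N : ℕ} (Y1 Y0 : Fin N → ℝ) (A : Finset (Fin N)) (i : Fin N) : ℝ :=
  if i ∈ A then Y1 i else Y0 i

/-- Treated-arm sample mean `Ŷ(1)`. -/
noncomputable def yhat1 {N : ℕ} (Y1 Y0 : Fin N → ℝ) (N₁ : ℕ) (A : Finset (Fin N)) : ℝ :=
  (∑ i, if i ∈ A then obsY Y1 Y0 A i else 0) / (N₁ : ℝ)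

/-- Control-arm sample mean `Ŷ(0)`. -/
noncomputable def yhat0 {N : ℕ} (Y1 Y0 : Fin N → ℝ) (N₀ : ℕ) (A : Finset (Fin N)) : ℝ :=
  (∑ i, if i ∉ A then obsY Y1 Y0 A i else 0) / (N₀ : ℝ)

/-- The difference-in-means estimator `τ̂ = Ŷ(1) - Ŷ(0)`. -/
noncomputable def tauhat {N : ℕ} (Y1 Y0 : Fin N → ℝ) (N₁ N₀ : ℕ) (A : Finset (Fin N)) : ℝ :=
  yhat1 Y1 Y0 N₁ A - yhat0 Y1 Y0 N₀ A

/-! ### Auxiliary lemmas -/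

lemma card_powersetCard_superset {N k : ℕ} (s : Finset (Fin N)) (hs : s.card ≤ k) :
    ((Finset.powersetCard k (univ : Finset (Fin N))).filter (fun A => s ⊆ A)).card
      = (N - s.card).choose (k - s.card) := by
  have hcard : (univ \ s : Finset (Fin N)).card = N - s.card := by
    rw [Finset.card_sdiff_of_subset (Finset.subset_univ s), Finset.card_univ, Fintype.card_fin]
  rw [← hcard, ← Finset.card_powersetCard (k - s.card) (univ \ s)]
  apply Finset.card_bij' (fun A _ => A \ s) (fun B _ => B ∪ s)
  · intro A hA
    simp only [Finset.mem_filter, Finset.mem_powersetCard] at hA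
    obtain ⟨⟨_, hAcard⟩, hsA⟩ := hA
    rw [Finset.mem_powersetCard]
    constructor
    · exact Finset.sdiff_subset_sdiff (Finset.subset_univ A) le_rfl
    · rw [Finset.card_sdiff_of_subset hsA, hAcard]
  · intro B hB
    rw [Finset.mem_powersetCard] at hB
    obtain ⟨hBsub, hBcard⟩ := hB
    have hdisj : Disjoint B s := (Finset.subset_sdiff.mp hBsub).2
    simp only [Finset.mem_filter, Finset.mem_powersetCard]
    refine ⟨⟨Finset.subset_univ _, ?_⟩, Finset.subset_union_right⟩
    rw [Finset.card_union_of_disjoint hdisj, hBcard]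
    omega
  · intro A hA
    simp only [Finset.mem_filter, Finset.mem_powersetCard] at hA
    exact Finset.sdiff_union_of_subset hA.2
  · intro B hB
    rw [Finset.mem_powersetCard] at hB
    have hdisj : Disjoint B s := (Finset.subset_sdiff.mp hB.1).2
    rw [Finset.union_sdiff_cancel_right hdisj]

lemma count_one {N k : ℕ} (i : Fin N) :
    (((assignments N k).filter (fun A => i ∈ A)).card) * N = N.choose k * k := by
  have hN : 1 ≤ N := i.pos
  rcases Nat.eq_zero_or_pos k with hk | hk
  · subst hk
    have : ((assignments N 0).filter (fun A => i ∈ A)).card = 0 := by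
      rw [Finset.card_eq_zero, Finset.filter_eq_empty_iff]
      intro A hA
      simp only [assignments, Finset.mem_powersetCard] at hA
      rw [Finset.card_eq_zero.mp hA.2]
      simp
    simp [this]
  · have h : ((assignments N k).filter (fun A => i ∈ A)).card = (N-1).choose (k-1) := by
      have := card_powersetCard_superset (k := k) ({i} : Finset (Fin N)) (by simp; omega)
      simpa [assignments, Finset.singleton_subset_iff] using this
    rw [h]
    have := Nat.add_one_mul_choose_eq (N-1) (k-1)
    rw [Nat.sub_add_cancel hN, Nat.sub_add_cancel hk] at this
    calc (N-1).choose (k-1) * N = N * (N-1).choose (k-1) := by ring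
    _ = N.choose k * k := this

lemma count_two {N k : ℕ} (i j : Fin N) (hij : i ≠ j) :
    (((assignments N k).filter (fun A => i ∈ A ∧ j ∈ A)).card) * (N * (N-1))
      = N.choose k * (k * (k-1)) := by
  have hN : 2 ≤ N := by
    by_contra h
    push_neg at h
    interval_cases N
    · exact absurd i.pos (by omega)
    · exact hij (Subsingleton.elim i j)
  rcases lt_or_ge k 2 with hk | hk
  · have : ((assignments N k).filter (fun A => i ∈ A ∧ j ∈ A)).card = 0 := by
      rw [Finset.card_eq_zero, Finset.filter_eq_empty_iff]
      intro A hA hmem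
      simp only [assignments, Finset.mem_powersetCard] at hA
      have : ({i, j} : Finset (Fin N)) ⊆ A := by
        intro x hx; simp only [Finset.mem_insert, Finset.mem_singleton] at hx
        rcases hx with h | h <;> subst h
        · exact hmem.1
        · exact hmem.2
      have := Finset.card_le_card this
      rw [Finset.card_insert_of_notMem (by simpa using hij), Finset.card_singleton, hA.2] at this
      omega
    rw [this]
    interval_cases k <;> simp
  · have hscard : ({i, j} : Finset (Fin N)).card = 2 := by
      rw [Finset.card_insert_of_notMem (by simpa using hij), Finset.card_singleton]
    have h : ((assignments N k).filter (fun A => i ∈ A ∧ j ∈ A)).card = (N-2).choose (k-2) := by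
      have := card_powersetCard_superset (k := k) ({i, j} : Finset (Fin N))
        (by rw [hscard]; exact hk)
      rw [hscard] at this
      rw [← this]
      show ((Finset.powersetCard k univ).filter _).card = _
      congr 1
      apply Finset.filter_congr
      intro A _
      simp [Finset.insert_subset_iff]
    rw [h]
    have h1 : (N-1) * (N-2).choose (k-2) = (N-1).choose (k-1) * (k-1) := by
      have := Nat.add_one_mul_choose_eq (N-2) (k-2)
      rw [show N - 2 + 1 = N - 1 from by omega, show k - 2 + 1 = k - 1 from by omega] at this
      exact this
    have h2 : N * (N-1).choose (k-1) = N.choose k * k := by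
      have := Nat.add_one_mul_choose_eq (N-1) (k-1)
      rw [Nat.sub_add_cancel (by omega : 1 ≤ N), Nat.sub_add_cancel (by omega : 1 ≤ k)] at this
      exact this
    calc (N-2).choose (k-2) * (N * (N-1)) = N * ((N-1) * (N-2).choose (k-2)) := by ring
    _ = N * ((N-1).choose (k-1) * (k-1)) := by rw [h1]
    _ = (N * (N-1).choose (k-1)) * (k-1) := by ring
    _ = (N.choose k * k) * (k-1) := by rw [h2]
    _ = N.choose k * (k * (k-1)) := by ring

lemma sum_over_mem {N : ℕ} (A : Finset (Fin N)) (g : Fin N → ℝ) :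
    ∑ i ∈ A, g i = ∑ i : Fin N, if i ∈ A then g i else 0 := by
  rw [Finset.sum_ite_mem univ A g, Finset.univ_inter]

lemma sq_sum_expand {N : ℕ} (A : Finset (Fin N)) (g : Fin N → ℝ) :
    (∑ i ∈ A, g i) ^ 2
      = ∑ i : Fin N, ∑ j : Fin N, if i ∈ A ∧ j ∈ A then g i * g j else 0 := by
  rw [sq, Finset.sum_mul_sum]
  rw [sum_over_mem A (fun i => ∑ j ∈ A, g i * g j)]
  refine Finset.sum_congr rfl fun i _ => ?_
  by_cases hi : i ∈ A
  · rw [if_pos hi, sum_over_mem A (fun j => g i * g j)]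
    exact Finset.sum_congr rfl fun j _ => by simp [hi]
  · rw [if_neg hi]
    simp [hi]

lemma first_moment {N k : ℕ} (g : Fin N → ℝ) :
    ∑ A ∈ assignments N k, ∑ i ∈ A, g i
      = ∑ i : Fin N, (((assignments N k).filter (fun A => i ∈ A)).card : ℝ) * g i := by
  simp_rw [fun A => sum_over_mem A g]
  rw [Finset.sum_comm]
  refine Finset.sum_congr rfl fun i _ => ?_
  rw [← Finset.sum_filter, Finset.sum_const, nsmul_eq_mul]

lemma second_moment {N k : ℕ} (g : Fin N → ℝ) :
    ∑ A ∈ assignments N k, (∑ i ∈ A, g i) ^ 2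
      = ∑ i : Fin N, ∑ j : Fin N,
          (((assignments N k).filter (fun A => i ∈ A ∧ j ∈ A)).card : ℝ) * (g i * g j) := by
  simp_rw [fun A => sq_sum_expand A g]
  rw [Finset.sum_comm]
  refine Finset.sum_congr rfl fun i _ => ?_
  rw [Finset.sum_comm]
  refine Finset.sum_congr rfl fun j _ => ?_
  rw [← Finset.sum_filter, Finset.sum_const, nsmul_eq_mul]

lemma varOver_moments {α : Type*} (s : Finset α) (f : α → ℝ) (hs : (s.card : ℝ) ≠ 0) :
    varOver s f = (∑ a ∈ s, f a ^ 2) / s.card - ((∑ a ∈ s, f a) / s.card) ^ 2 := by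
  unfold varOver avgOver
  have hexp : ∀ a ∈ s, (f a - (∑ b ∈ s, f b) / s.card) ^ 2
      = f a ^ 2 - 2 * ((∑ b ∈ s, f b) / s.card) * f a + ((∑ b ∈ s, f b) / s.card) ^ 2 := by
    intro a _; ring
  rw [Finset.sum_congr rfl hexp]
  rw [Finset.sum_add_distrib, Finset.sum_sub_distrib, ← Finset.mul_sum, Finset.sum_const,
    nsmul_eq_mul]
  field_simp
  ring

lemma varOver_sub_const {α : Type*} (s : Finset α) (f : α → ℝ) (K : ℝ)
    (hs : (s.card : ℝ) ≠ 0) :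
    varOver s (fun a => f a - K) = varOver s f := by
  have havg : avgOver s (fun a => f a - K) = avgOver s f - K := by
    unfold avgOver
    rw [Finset.sum_sub_distrib, Finset.sum_const, nsmul_eq_mul]
    field_simp
  unfold varOver
  rw [havg]
  congr 1
  funext a
  ring

lemma sum_sq_dev {N : ℕ} (hN : (N : ℝ) ≠ 0) (Y : Fin N → ℝ) :
    ∑ i, (Y i - fpMean Y) ^ 2 = ∑ i, Y i ^ 2 - (∑ i, Y i) ^ 2 / N := by
  unfold fpMean
  have hexp : ∀ i ∈ (univ : Finset (Fin N)), (Y i - (∑ j, Y j) / N) ^ 2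
      = Y i ^ 2 - 2 * ((∑ j, Y j) / N) * Y i + ((∑ j, Y j) / N) ^ 2 := fun i _ => by ring
  rw [Finset.sum_congr rfl hexp, Finset.sum_add_distrib, Finset.sum_sub_distrib,
    ← Finset.mul_sum, Finset.sum_const, Finset.card_univ, Fintype.card_fin, nsmul_eq_mul]
  field_simp
  ring

/-- Neyman's variance formula: under complete randomization,
`Var(τ̂) = S²(1)/N₁ + S²(0)/N₀ - S²(τ)/N`. -/
theorem diff_in_means_variance (N N₁ N₀ : ℕ) (hadd : N₁ + N₀ = N)
    (h1 : 1 ≤ N₁) (h0 : 1 ≤ N₀) (Y1 Y0 : Fin N → ℝ) :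
    varOver (assignments N N₁) (tauhat Y1 Y0 N₁ N₀)
      = fpVar Y1 / (N₁ : ℝ) + fpVar Y0 / (N₀ : ℝ)
        - fpVar (fun i => Y1 i - Y0 i) / (N : ℝ) := by
  have hN2 : 2 ≤ N := by omega
  have hkN : N₁ ≤ N := by omega
  have hn1 : (N₁ : ℝ) ≠ 0 := Nat.cast_ne_zero.mpr (by omega)
  have hn0 : (N₀ : ℝ) ≠ 0 := Nat.cast_ne_zero.mpr (by omega)
  have hn : (N : ℝ) ≠ 0 := Nat.cast_ne_zero.mpr (by omega)
  have hn' : (N : ℝ) - 1 ≠ 0 := by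
    have : (2 : ℝ) ≤ N := by exact_mod_cast hN2
    linarith
  set M : ℕ := N.choose N₁ with hMdef
  have hMpos : 0 < M := Nat.choose_pos hkN
  have hM : (M : ℝ) ≠ 0 := Nat.cast_ne_zero.mpr hMpos.ne'
  have hcard : (assignments N N₁).card = M := by
    rw [assignments, Finset.card_powersetCard, Finset.card_univ, Fintype.card_fin]
  have hcard' : ((assignments N N₁).card : ℝ) ≠ 0 := by rw [hcard]; exact hM
  -- abbreviations
  set c : Fin N → ℝ := fun i => Y1 i / N₁ + Y0 i / N₀ with hc
  set K : ℝ := (∑ i, Y0 i) / N₀ with hK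
  -- rewrite tauhat
  have htau : tauhat Y1 Y0 N₁ N₀ = fun A => (∑ i ∈ A, c i) - K := by
    funext A
    unfold tauhat yhat1 yhat0 obsY
    have e1 : ∑ i, (if i ∈ A then (if i ∈ A then Y1 i else Y0 i) else 0)
        = ∑ i ∈ A, Y1 i := by
      rw [sum_over_mem A Y1]
      exact Finset.sum_congr rfl fun i _ => by by_cases h : i ∈ A <;> simp [h]
    have e2 : ∑ i, (if i ∉ A then (if i ∈ A then Y1 i else Y0 i) else 0)
        = ∑ i, Y0 i - ∑ i ∈ A, Y0 i := by
      rw [sum_over_mem A Y0, eq_sub_iff_add_eq, ← Finset.sum_add_distrib]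
      exact Finset.sum_congr rfl fun i _ => by by_cases h : i ∈ A <;> simp [h]
    rw [e1, e2, hc, hK]
    rw [Finset.sum_add_distrib, ← Finset.sum_div, ← Finset.sum_div]
    ring
  rw [htau, varOver_sub_const _ _ _ hcard', varOver_moments _ _ hcard', hcard]
  -- moment computations
  set G : ℝ := ∑ i, c i with hG
  set Q : ℝ := ∑ i, c i ^ 2 with hQ
  have hcnt1 : ∀ i : Fin N,
      (((assignments N N₁).filter (fun A => i ∈ A)).card : ℝ) = M * N₁ / N := by
    intro i
    have := count_one (k := N₁) i
    have hcast : (((assignments N N₁).filter (fun A => i ∈ A)).card : ℝ) * N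
        = (M : ℝ) * N₁ := by exact_mod_cast this
    field_simp at hcast ⊢
    linarith [hcast]
  have hm1 : ∑ A ∈ assignments N N₁, ∑ i ∈ A, c i = M * N₁ / N * G := by
    rw [first_moment]
    rw [hG, Finset.mul_sum]
    exact Finset.sum_congr rfl fun i _ => by rw [hcnt1 i]
  have hcnt2 : ∀ i j : Fin N, i ≠ j →
      (((assignments N N₁).filter (fun A => i ∈ A ∧ j ∈ A)).card : ℝ)
        = M * (N₁ * ((N₁ : ℝ) - 1)) / (N * ((N : ℝ) - 1)) := by
    intro i j hij
    have := count_two (k := N₁) i j hij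
    have hcast : (((assignments N N₁).filter (fun A => i ∈ A ∧ j ∈ A)).card : ℝ)
        * ((N : ℝ) * ((N : ℝ) - 1)) = (M : ℝ) * ((N₁ : ℝ) * ((N₁ : ℝ) - 1)) := by
      have := congrArg (Nat.cast : ℕ → ℝ) this
      push_cast [Nat.cast_sub (by omega : 1 ≤ N), Nat.cast_sub h1] at this
      convert this using 2
    have hnn : (N : ℝ) * ((N : ℝ) - 1) ≠ 0 := mul_ne_zero hn hn'
    field_simp
    linarith [hcast]
  have hm2 : ∑ A ∈ assignments N N₁, (∑ i ∈ A, c i) ^ 2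
      = M * N₁ / N * Q + M * (N₁ * ((N₁ : ℝ) - 1)) / (N * ((N : ℝ) - 1)) * (G ^ 2 - Q) := by
    rw [second_moment]
    have hsplit : ∀ i : Fin N,
        ∑ j : Fin N, (((assignments N N₁).filter (fun A => i ∈ A ∧ j ∈ A)).card : ℝ)
            * (c i * c j)
          = M * N₁ / N * c i ^ 2
            + M * (N₁ * ((N₁ : ℝ) - 1)) / (N * ((N : ℝ) - 1)) * (c i * (G - c i)) := by
      intro i
      rw [← Finset.add_sum_erase (univ : Finset (Fin N)) _ (Finset.mem_univ i)]
      have hdiag : (((assignments N N₁).filter (fun A => i ∈ A ∧ i ∈ A)).card : ℝ)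
          = M * N₁ / N := by
        simp only [and_self]
        exact hcnt1 i
      rw [hdiag]
      have hoff : ∑ j ∈ (univ : Finset (Fin N)).erase i,
          (((assignments N N₁).filter (fun A => i ∈ A ∧ j ∈ A)).card : ℝ) * (c i * c j)
          = M * (N₁ * ((N₁ : ℝ) - 1)) / (N * ((N : ℝ) - 1))
            * (c i * ∑ j ∈ (univ : Finset (Fin N)).erase i, c j) := by
        rw [Finset.mul_sum, Finset.mul_sum]
        refine Finset.sum_congr rfl fun j hj => ?_
        have hij : i ≠ j := fun h => (Finset.mem_erase.mp hj).1 h.symm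
        rw [hcnt2 i j hij]
      rw [hoff]
      have herase : ∑ j ∈ (univ : Finset (Fin N)).erase i, c j = G - c i := by
        rw [hG, eq_sub_iff_add_eq, add_comm]
        exact Finset.add_sum_erase _ _ (Finset.mem_univ i)
      rw [herase]
      ring
    rw [Finset.sum_congr rfl fun i _ => hsplit i]
    rw [Finset.sum_add_distrib, ← Finset.mul_sum, ← Finset.mul_sum, ← hQ]
    congr 1
    have : ∑ i, c i * (G - c i) = G ^ 2 - Q := by
      have : ∀ i ∈ (univ : Finset (Fin N)), c i * (G - c i) = c i * G - c i ^ 2 :=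
        fun i _ => by ring
      rw [Finset.sum_congr rfl this, Finset.sum_sub_distrib, ← Finset.sum_mul, ← hG, ← hQ]
      ring
    rw [this]
  rw [hm1, hm2]
  -- express population variances
  have hfp1 : fpVar Y1 = (∑ i, Y1 i ^ 2 - (∑ i, Y1 i) ^ 2 / N) / ((N : ℝ) - 1) := by
    rw [fpVar, sum_sq_dev hn]
  have hfp0 : fpVar Y0 = (∑ i, Y0 i ^ 2 - (∑ i, Y0 i) ^ 2 / N) / ((N : ℝ) - 1) := by
    rw [fpVar, sum_sq_dev hn]
  have hfpt : fpVar (fun i => Y1 i - Y0 i)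
      = ((∑ i, Y1 i ^ 2 - 2 * (∑ i, Y1 i * Y0 i) + ∑ i, Y0 i ^ 2)
          - (∑ i, Y1 i - ∑ i, Y0 i) ^ 2 / N) / ((N : ℝ) - 1) := by
    rw [fpVar, sum_sq_dev hn]
    congr 1
    · congr 1
      · have : ∀ i ∈ (univ : Finset (Fin N)), (Y1 i - Y0 i) ^ 2
            = Y1 i ^ 2 - 2 * (Y1 i * Y0 i) + Y0 i ^ 2 := fun i _ => by ring
        rw [Finset.sum_congr rfl this, Finset.sum_add_distrib, Finset.sum_sub_distrib,
          ← Finset.mul_sum]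
      · rw [Finset.sum_sub_distrib]
  rw [hfp1, hfp0, hfpt]
  -- express G and Q in terms of the atomic sums
  have hGval : G = (∑ i, Y1 i) / N₁ + (∑ i, Y0 i) / N₀ := by
    rw [hG, hc, Finset.sum_add_distrib, Finset.sum_div, Finset.sum_div]
  have hQval : Q = (∑ i, Y1 i ^ 2) / N₁ ^ 2 + 2 * (∑ i, Y1 i * Y0 i) / (N₁ * N₀)
      + (∑ i, Y0 i ^ 2) / N₀ ^ 2 := by
    rw [hQ, hc]
    have : ∀ i ∈ (univ : Finset (Fin N)), (Y1 i / N₁ + Y0 i / N₀) ^ 2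
        = Y1 i ^ 2 / N₁ ^ 2 + 2 * (Y1 i * Y0 i) / (N₁ * N₀) + Y0 i ^ 2 / N₀ ^ 2 :=
      fun i _ => by field_simp; ring
    have e1 : ∑ i, Y1 i ^ 2 / (N₁ : ℝ) ^ 2 = (∑ i, Y1 i ^ 2) / (N₁ : ℝ) ^ 2 :=
      (Finset.sum_div _ _ _).symm
    have e2 : ∑ i, 2 * (Y1 i * Y0 i) / ((N₁ : ℝ) * N₀)
        = 2 * (∑ i, Y1 i * Y0 i) / ((N₁ : ℝ) * N₀) := by
      rw [← Finset.sum_div, ← Finset.mul_sum]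
    have e3 : ∑ i, Y0 i ^ 2 / (N₀ : ℝ) ^ 2 = (∑ i, Y0 i ^ 2) / (N₀ : ℝ) ^ 2 :=
      (Finset.sum_div _ _ _).symm
    rw [Finset.sum_congr rfl this, Finset.sum_add_distrib, Finset.sum_add_distrib, e1, e2, e3]
  rw [hGval, hQval]
  have hNcast : (N : ℝ) = (N₁ : ℝ) + (N₀ : ℝ) := by
    rw [← hadd]; push_cast; ring
  rw [hNcast]
  have hsum : (N₁ : ℝ) + (N₀ : ℝ) ≠ 0 := by positivity
  have hsum1 : (N₁ : ℝ) + (N₀ : ℝ) - 1 ≠ 0 := by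
    have h1' : (1 : ℝ) ≤ (N₁ : ℝ) := by exact_mod_cast h1
    have h0' : (1 : ℝ) ≤ (N₀ : ℝ) := by exact_mod_cast h0
    linarith
  field_simp
  ring
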